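/- For fixed r and t ∈ [0,1), the function u(z) = r + √(2π(1-t))(1-β²) exp((z-r)²/(2(1-t))) Φ((z-r)/√(1-t)) satisfies the PDE relation ∂_t u + ((r - z)/(1-t)) ∂_z u + (1/2) ∂²_z u = 0 for all z ∈ ℝ. -/

import Mathlib

open Real Set

/-- The standard normal cumulative distribution function. -/
noncomputable def Phi (x : ℝ) : ℝ :=
  (Real.sqrt (2 * Real.pi))⁻¹ * ∫ u in Set.Iic x, Real.exp (-u ^ 2 / 2)

/-- The smooth part of the value function for a Brownian bridge pinning at `r`. -/
noncomputable def F (r β t z : ℝ) : ℝ :=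
  r + Real.sqrt (2 * Real.pi * (1 - t)) * (1 - β ^ 2) *
    Real.exp ((z - r) ^ 2 / (2 * (1 - t))) * Phi ((z - r) / Real.sqrt (1 - t))

open MeasureTheory in
lemma gauss_integrable : Integrable (fun u : ℝ => Real.exp (-u ^ 2 / 2)) := by
  have : (fun u : ℝ => Real.exp (-u ^ 2 / 2)) = fun u => Real.exp (-(1/2) * u ^ 2) := by
    funext u; ring_nf
  rw [this]
  exact integrable_exp_neg_mul_sq (by norm_num)

open MeasureTheory in
lemma hasDerivAt_Phi (x : ℝ) :
    HasDerivAt Phi ((Real.sqrt (2 * Real.pi))⁻¹ * Real.exp (-x ^ 2 / 2)) x := by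
  have hint := gauss_integrable
  have h1 : ∀ y : ℝ, Phi y = (Real.sqrt (2 * Real.pi))⁻¹ *
      ((∫ u in Set.Iic (0:ℝ), Real.exp (-u ^ 2 / 2)) + ∫ u in (0:ℝ)..y, Real.exp (-u ^ 2 / 2)) := by
    intro y
    rw [Phi]
    have := intervalIntegral.integral_Iic_sub_Iic (μ := volume)
      (f := fun u : ℝ => Real.exp (-u ^ 2 / 2)) (hint.integrableOn) (hint.integrableOn) (a := 0) (b := y)
    rw [← this]; ring
  have h2 : HasDerivAt (fun y => ∫ u in (0:ℝ)..y, Real.exp (-u ^ 2 / 2)) (Real.exp (-x ^ 2 / 2)) x := by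
    exact intervalIntegral.integral_hasDerivAt_right hint.intervalIntegrable
      hint.aestronglyMeasurable.stronglyMeasurableAtFilter
      (Real.continuous_exp.comp (by continuity)).continuousAt
  have h3 : HasDerivAt (fun y => (Real.sqrt (2 * Real.pi))⁻¹ *
      ((∫ u in Set.Iic (0:ℝ), Real.exp (-u ^ 2 / 2)) + ∫ u in (0:ℝ)..y, Real.exp (-u ^ 2 / 2)))
      ((Real.sqrt (2 * Real.pi))⁻¹ * Real.exp (-x ^ 2 / 2)) x :=
    ((h2.const_add _).const_mul _)
  have : Phi = fun y => (Real.sqrt (2 * Real.pi))⁻¹ *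
      ((∫ u in Set.Iic (0:ℝ), Real.exp (-u ^ 2 / 2)) + ∫ u in (0:ℝ)..y, Real.exp (-u ^ 2 / 2)) :=
    funext h1
  rw [this]; exact h3

noncomputable def G (c y : ℝ) : ℝ :=
  Real.sqrt (2 * Real.pi * c) * Real.exp (y ^ 2 / (2 * c)) * Phi (y / Real.sqrt c)

lemma exp_cancel {c : ℝ} (hc : 0 < c) (x : ℝ) :
    Real.exp (x ^ 2 / (2 * c)) * Real.exp (-(x / Real.sqrt c) ^ 2 / 2) = 1 := by
  rw [← Real.exp_add, div_pow, Real.sq_sqrt hc.le,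
    show x ^ 2 / (2 * c) + -(x ^ 2 / c) / 2 = 0 from by field_simp; ring]
  exact Real.exp_zero

lemma sqrt_two_pi_mul {c : ℝ} (hc : 0 < c) :
    Real.sqrt (2 * Real.pi * c) = Real.sqrt (2 * Real.pi) * Real.sqrt c :=
  Real.sqrt_mul (by positivity) c

lemma hG_z {c : ℝ} (hc : 0 < c) (x : ℝ) :
    HasDerivAt (fun y => G c y) (x / c * G c x + 1) x := by
  have hsc : Real.sqrt c ≠ 0 := (Real.sqrt_pos.2 hc).ne'
  have h2pi : Real.sqrt (2 * Real.pi) ≠ 0 := by positivity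
  have hexp : HasDerivAt (fun y : ℝ => Real.exp (y ^ 2 / (2 * c)))
      (Real.exp (x ^ 2 / (2 * c)) * (2 * x ^ 1 / (2 * c))) x :=
    ((hasDerivAt_pow 2 x).div_const (2 * c)).exp
  have hphi : HasDerivAt (fun y : ℝ => Phi (y / Real.sqrt c))
      ((Real.sqrt (2 * Real.pi))⁻¹ * Real.exp (-(x / Real.sqrt c) ^ 2 / 2) * (1 / Real.sqrt c)) x := by
    have := (hasDerivAt_Phi (x / Real.sqrt c)).comp x ((hasDerivAt_id x).div_const (Real.sqrt c))
    simpa [Function.comp_def] using this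
  have h := (hexp.const_mul (Real.sqrt (2 * Real.pi * c))).mul hphi
  have heq : Real.sqrt (2 * Real.pi * c) * (Real.exp (x ^ 2 / (2 * c)) * (2 * x ^ 1 / (2 * c))) *
        Phi (x / Real.sqrt c) +
      Real.sqrt (2 * Real.pi * c) * Real.exp (x ^ 2 / (2 * c)) *
        ((Real.sqrt (2 * Real.pi))⁻¹ * Real.exp (-(x / Real.sqrt c) ^ 2 / 2) * (1 / Real.sqrt c)) =
      x / c * G c x + 1 := by
    have h1 := exp_cancel hc x
    rw [div_pow, Real.sq_sqrt hc.le] at h1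
    rw [div_pow, Real.sq_sqrt hc.le, sqrt_two_pi_mul hc, G, sqrt_two_pi_mul hc]
    field_simp
    ring_nf
    ring_nf at h1
    linear_combination c * h1
  rw [← heq]
  exact h

lemma alg (c S u E E' P x : ℝ) (hu2 : u ^ 2 = c) (hu : u ≠ 0) (hS : S ≠ 0)
    (hEE : E * E' = 1) :
    S * u * E * P * (x ^ 2 / (2 * c ^ 2) - 1 / (2 * c)) + x / (2 * c) =
      (S * (1 / (2 * u) * -1) * E + S * u * (E * ((0 * (2 * c) - x ^ 2 * (2 * -1)) / (2 * c) ^ 2))) * P +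
        S * u * E * (S⁻¹ * E' * ((0 * u - x * (1 / (2 * u) * -1)) / u ^ 2)) := by
  subst hu2
  field_simp
  ring_nf
  ring_nf at hEE
  linear_combination (-x * u) * hEE

set_option maxHeartbeats 1000000 in
lemma hG_t (x t : ℝ) (ht : t < 1) :
    HasDerivAt (fun s => G (1 - s) x)
      (G (1 - t) x * (x ^ 2 / (2 * (1 - t) ^ 2) - 1 / (2 * (1 - t))) + x / (2 * (1 - t))) t := by
  have hc : 0 < 1 - t := by linarith
  have hsc : Real.sqrt (1 - t) ≠ 0 := (Real.sqrt_pos.2 hc).ne'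
  have h2pi : Real.sqrt (2 * Real.pi) ≠ 0 := by positivity
  have hGfun : (fun s => G (1 - s) x) = fun s =>
      Real.sqrt (2 * Real.pi) * Real.sqrt (1 - s) * Real.exp (x ^ 2 / (2 * (1 - s))) *
        Phi (x / Real.sqrt (1 - s)) := by
    funext s
    rw [G, Real.sqrt_mul (by positivity : (0:ℝ) ≤ 2 * Real.pi)]
  have hone : HasDerivAt (fun s : ℝ => 1 - s) (-1) t := (hasDerivAt_id t).const_sub 1
  have hsqrt : HasDerivAt (fun s : ℝ => Real.sqrt (1 - s)) (1 / (2 * Real.sqrt (1 - t)) * (-1)) t :=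
    (Real.hasDerivAt_sqrt hc.ne').comp t hone
  have hA : HasDerivAt (fun s : ℝ => Real.sqrt (2 * Real.pi) * Real.sqrt (1 - s))
      (Real.sqrt (2 * Real.pi) * (1 / (2 * Real.sqrt (1 - t)) * (-1))) t := hsqrt.const_mul _
  have hBin : HasDerivAt (fun s : ℝ => x ^ 2 / (2 * (1 - s)))
      ((0 * (2 * (1 - t)) - x ^ 2 * (2 * -1)) / (2 * (1 - t)) ^ 2) t :=
    (hasDerivAt_const t (x ^ 2)).div (hone.const_mul 2) (by positivity)
  have hB : HasDerivAt (fun s : ℝ => Real.exp (x ^ 2 / (2 * (1 - s))))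
      (Real.exp (x ^ 2 / (2 * (1 - t))) * ((0 * (2 * (1 - t)) - x ^ 2 * (2 * -1)) / (2 * (1 - t)) ^ 2)) t :=
    hBin.exp
  have hCin : HasDerivAt (fun s : ℝ => x / Real.sqrt (1 - s))
      ((0 * Real.sqrt (1 - t) - x * (1 / (2 * Real.sqrt (1 - t)) * (-1))) / Real.sqrt (1 - t) ^ 2) t :=
    (hasDerivAt_const t x).div hsqrt hsc
  have hC : HasDerivAt (fun s : ℝ => Phi (x / Real.sqrt (1 - s)))
      ((Real.sqrt (2 * Real.pi))⁻¹ * Real.exp (-(x / Real.sqrt (1 - t)) ^ 2 / 2) *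
        ((0 * Real.sqrt (1 - t) - x * (1 / (2 * Real.sqrt (1 - t)) * (-1))) / Real.sqrt (1 - t) ^ 2)) t :=
    (hasDerivAt_Phi _).comp t hCin
  have h := (hA.mul hB).mul hC
  rw [hGfun]
  refine h.congr_deriv ?_
  symm
  rw [G, Real.sqrt_mul (by positivity : (0:ℝ) ≤ 2 * Real.pi)]
  exact alg (1 - t) _ _ _ _ _ x (Real.sq_sqrt hc.le) hsc h2pi (exp_cancel hc x)

lemma F_eq (r β t z : ℝ) : F r β t z = r + (1 - β ^ 2) * G (1 - t) (z - r) := by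
  rw [F, G]; ring

lemma F_hz (r β t : ℝ) (ht : t < 1) (z : ℝ) :
    HasDerivAt (fun y => F r β t y)
      ((1 - β ^ 2) * ((z - r) / (1 - t) * G (1 - t) (z - r) + 1)) z := by
  have hc : 0 < 1 - t := by linarith
  have h := (((hG_z hc (z - r)).comp z ((hasDerivAt_id z).sub_const r)).const_mul
    (1 - β ^ 2)).const_add r
  have hfun : (fun y => r + (1 - β ^ 2) * G (1 - t) (y - r)) = fun y => F r β t y := by
    funext y; rw [F_eq]
  rw [← hfun]
  simpa using h

lemma deriv_F_z (r β t : ℝ) (ht : t < 1) :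
    deriv (fun y => F r β t y) =
      fun z => (1 - β ^ 2) * ((z - r) / (1 - t) * G (1 - t) (z - r) + 1) :=
  funext fun z => (F_hz r β t ht z).deriv

lemma F_hzz (r β t : ℝ) (ht : t < 1) (z : ℝ) :
    HasDerivAt (fun y => (1 - β ^ 2) * ((y - r) / (1 - t) * G (1 - t) (y - r) + 1))
      ((1 - β ^ 2) * (1 / (1 - t) * G (1 - t) (z - r) +
        (z - r) / (1 - t) * ((z - r) / (1 - t) * G (1 - t) (z - r) + 1))) z := by
  have hc : 0 < 1 - t := by linarith
  have h1 : HasDerivAt (fun y : ℝ => (y - r) / (1 - t)) (1 / (1 - t)) z := by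
    simpa using ((hasDerivAt_id z).sub_const r).div_const (1 - t)
  have h2 : HasDerivAt (fun y => G (1 - t) (y - r))
      ((z - r) / (1 - t) * G (1 - t) (z - r) + 1) z := by
    simpa [Function.comp_def] using (hG_z hc (z - r)).comp z ((hasDerivAt_id z).sub_const r)
  exact ((h1.mul h2).add_const 1).const_mul _

theorem stmt18 (r β : ℝ) :
    ∀ t ∈ Set.Ico (0 : ℝ) 1, ∀ z : ℝ,
      deriv (fun s => F r β s z) t + ((r - z) / (1 - t)) * deriv (fun y => F r β t y) z +
        (1 / 2) * deriv (deriv (fun y => F r β t y)) z = 0 := by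
  intro t ht z
  have ht1 : t < 1 := ht.2
  have hc : 0 < 1 - t := by linarith
  have hdt : deriv (fun s => F r β s z) t =
      (1 - β ^ 2) * (G (1 - t) (z - r) * ((z - r) ^ 2 / (2 * (1 - t) ^ 2) - 1 / (2 * (1 - t))) +
        (z - r) / (2 * (1 - t))) := by
    have hfun : (fun s => F r β s z) = fun s => r + (1 - β ^ 2) * G (1 - s) (z - r) := by
      funext s; rw [F_eq]
    rw [hfun]
    exact (((hG_t (z - r) t ht1).const_mul (1 - β ^ 2)).const_add r).deriv
  have hdz : deriv (fun y => F r β t y) z =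
      (1 - β ^ 2) * ((z - r) / (1 - t) * G (1 - t) (z - r) + 1) := (F_hz r β t ht1 z).deriv
  have hdzz : deriv (deriv (fun y => F r β t y)) z =
      (1 - β ^ 2) * (1 / (1 - t) * G (1 - t) (z - r) +
        (z - r) / (1 - t) * ((z - r) / (1 - t) * G (1 - t) (z - r) + 1)) := by
    rw [deriv_F_z r β t ht1]
    exact (F_hzz r β t ht1 z).deriv
  rw [hdt, hdz, hdzz]
  field_simp
  ring
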